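/- Every finite tree T rooted at a vertex t₀ admits a tidy ancestral ordering of its vertices. -/

import Mathlib

set_option linter.unusedSectionVars false
open SimpleGraph List
attribute [local instance] Classical.propDecidable

namespace Tidy
variable {V : Type} [Fintype V] {T : SimpleGraph V} {t₀ : V}

lemma dist_lt_card (hT : T.IsTree) (x : V) : T.dist t₀ x < Fintype.card V := by
  obtain ⟨w, hw⟩ := (hT.isConnected t₀ x).exists_walk_length_eq_dist
  classical
  have h1 : w.bypass.length < Fintype.card V := w.bypass_isPath.length_lt
  have h2 : T.dist t₀ x ≤ w.bypass.length := SimpleGraph.dist_le _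
  omega

lemma adj_dist_le (hT : T.IsTree) {x y : V} (h : T.Adj x y) :
    T.dist t₀ y ≤ T.dist t₀ x + 1 := by
  calc T.dist t₀ y ≤ T.dist t₀ x + T.dist x y := hT.isConnected.dist_triangle
    _ ≤ T.dist t₀ x + 1 := by
        have : T.dist x y ≤ 1 := by
          have := SimpleGraph.dist_le (SimpleGraph.Walk.cons h SimpleGraph.Walk.nil)
          simpa using this
        omega

lemma exists_parent (hT : T.IsTree) {x : V} (hx : 0 < T.dist t₀ x) :
    ∃ y : V, T.Adj x y ∧ T.dist t₀ y + 1 = T.dist t₀ x := by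
  obtain ⟨w, hw⟩ := (hT.isConnected t₀ x).exists_walk_length_eq_dist
  have hrev : w.reverse.length = T.dist t₀ x := by simp [hw]
  cases hr : w.reverse with
  | nil => exfalso; rw [hr] at hrev; simp at hrev; simp at hx
  | cons h p =>
    rename_i y
    refine ⟨y, h, ?_⟩
    have h1 : T.dist t₀ y ≤ p.length := by
      have := SimpleGraph.dist_le p.reverse
      simpa [SimpleGraph.dist_comm] using this
    have h2 : p.length + 1 = T.dist t₀ x := by
      rw [hr] at hrev; simpa using hrev
    have h3 : T.dist t₀ x ≤ T.dist t₀ y + 1 := adj_dist_le hT h.symm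
    omega

-- uniqueness of parent
lemma parent_unique (hT : T.IsTree) {x y₁ y₂ : V}
    (h1 : T.Adj x y₁) (hd1 : T.dist t₀ y₁ + 1 = T.dist t₀ x)
    (h2 : T.Adj x y₂) (hd2 : T.dist t₀ y₂ + 1 = T.dist t₀ x) : y₁ = y₂ := by
  classical
  -- shortest paths to y₁ y₂
  have key : ∀ (y : V), T.Adj x y → T.dist t₀ y + 1 = T.dist t₀ x →
      ∃ (q : T.Walk t₀ x), q.IsPath ∧ q.reverse.getVert 1 = y := by
    intro y hadj hd
    obtain ⟨w, hw⟩ := (hT.isConnected t₀ y).exists_walk_length_eq_dist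
    set p := w.bypass with hp
    have hpath : p.IsPath := w.bypass_isPath
    have hplen : p.length = T.dist t₀ y := by
      have h6 : p.length ≤ w.length := w.length_bypass_le
      have h7 := SimpleGraph.dist_le p
      omega
    have hxs : x ∉ p.support := by
      intro hxp
      have h4 : (p.takeUntil x hxp).length ≤ p.length := p.length_takeUntil_le hxp
      have h5 : T.dist t₀ x ≤ (p.takeUntil x hxp).length := SimpleGraph.dist_le _
      omega
    refine ⟨p.concat hadj.symm, ?_, ?_⟩
    · have : (p.concat hadj.symm).reverse.IsPath := by
        rw [SimpleGraph.Walk.reverse_concat]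
        rw [SimpleGraph.Walk.cons_isPath_iff]
        exact ⟨hpath.reverse, by simpa using hxs⟩
      rwa [SimpleGraph.Walk.isPath_reverse_iff] at this
    · rw [SimpleGraph.Walk.reverse_concat]
      simp [SimpleGraph.Walk.getVert_cons_succ]
  obtain ⟨q1, hq1, hg1⟩ := key y₁ h1 hd1
  obtain ⟨q2, hq2, hg2⟩ := key y₂ h2 hd2
  obtain ⟨p, -, hup⟩ := hT.existsUnique_path t₀ x
  have e1 := hup q1 hq1
  have e2 := hup q2 hq2
  rw [← hg1, ← hg2, e1, e2]


variable {V : Type} [Fintype V] {T : SimpleGraph V} {t₀ : V}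

noncomputable def par (T : SimpleGraph V) (t₀ x : V) : V :=
  if h : ∃ y, T.Adj x y ∧ T.dist t₀ y + 1 = T.dist t₀ x then h.choose else t₀

lemma par_spec (hT : T.IsTree) {x : V} (hx : 0 < T.dist t₀ x) :
    T.Adj x (par T t₀ x) ∧ T.dist t₀ (par T t₀ x) + 1 = T.dist t₀ x := by
  have h : ∃ y, T.Adj x y ∧ T.dist t₀ y + 1 = T.dist t₀ x := exists_parent hT hx
  rw [par, dif_pos h]; exact h.choose_spec

lemma par_eq (hT : T.IsTree) {x y : V} (h : T.Adj x y) (hd : T.dist t₀ y + 1 = T.dist t₀ x) :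
    par T t₀ x = y := by
  have hx : 0 < T.dist t₀ x := by omega
  obtain ⟨h1, h2⟩ := par_spec hT hx
  exact parent_unique hT h1 h2 h hd

noncomputable def children (T : SimpleGraph V) (t₀ v : V) : List V :=
  (Finset.univ.filter fun w => T.Adj v w ∧ T.dist t₀ w = T.dist t₀ v + 1).toList

lemma mem_children {v w : V} : w ∈ children T t₀ v ↔ T.Adj v w ∧ T.dist t₀ w = T.dist t₀ v + 1 := by
  simp [children]

noncomputable def flat (T : SimpleGraph V) (t₀ : V) : ℕ → V → List V
  | 0, v => [v]
  | (f+1), v => v :: (((children T t₀ v).map (flat T t₀ f)).mergeSort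
      (fun a b => a.length ≤ b.length)).flatten

lemma flat_succ (f : ℕ) (v : V) : flat T t₀ (f+1) v = v :: (((children T t₀ v).map (flat T t₀ f)).mergeSort
      (fun a b => a.length ≤ b.length)).flatten := rfl

lemma head_mem_flat (f : ℕ) (v : V) : v ∈ flat T t₀ f v := by
  cases f <;> simp [flat]

lemma mem_flat_succ {f : ℕ} {v x : V} :
    x ∈ flat T t₀ (f+1) v ↔ x = v ∨ ∃ u ∈ children T t₀ v, x ∈ flat T t₀ f u := by
  rw [flat_succ]
  simp only [List.mem_cons, List.mem_flatten]
  constructor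
  · rintro (h | ⟨b, hb, hxb⟩)
    · exact Or.inl h
    · right
      have hb' : b ∈ (children T t₀ v).map (flat T t₀ f) :=
        (List.mergeSort_perm _ _).mem_iff.mp hb
      obtain ⟨u, hu, rfl⟩ := List.mem_map.mp hb'
      exact ⟨u, hu, hxb⟩
  · rintro (h | ⟨u, hu, hxu⟩)
    · exact Or.inl h
    · right
      refine ⟨flat T t₀ f u, ?_, hxu⟩
      exact (List.mergeSort_perm _ _).mem_iff.mpr (List.mem_map.mpr ⟨u, hu, rfl⟩)

-- P3: members are descendants
lemma flat_ancestor (hT : T.IsTree) : ∀ (f : ℕ) (v x : V), x ∈ flat T t₀ f v →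
    T.dist t₀ v ≤ T.dist t₀ x ∧ (par T t₀)^[T.dist t₀ x - T.dist t₀ v] x = v := by
  intro f
  induction f with
  | zero => intro v x hx; simp [flat] at hx; subst hx; simp
  | succ f ih =>
    intro v x hx
    rcases mem_flat_succ.mp hx with rfl | ⟨u, hu, hxu⟩
    · simp
    · obtain ⟨hadj, hdu⟩ := mem_children.mp hu
      obtain ⟨h1, h2⟩ := ih u x hxu
      have hdv : T.dist t₀ v ≤ T.dist t₀ x := by omega
      refine ⟨hdv, ?_⟩
      have hk : T.dist t₀ x - T.dist t₀ v = (T.dist t₀ x - T.dist t₀ u) + 1 := by omega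
      rw [hk, Function.iterate_succ_apply', h2]
      exact par_eq hT hadj.symm (by omega)

-- P4: completeness
lemma mem_flat_of_chain (hT : T.IsTree) : ∀ (k f : ℕ) (v x : V), k ≤ f →
    T.dist t₀ x = T.dist t₀ v + k → (par T t₀)^[k] x = v → x ∈ flat T t₀ f v := by
  intro k
  induction k with
  | zero =>
    intro f v x _ _ hc
    simp only [Function.iterate_zero, id_eq] at hc
    subst hc; exact head_mem_flat f x
  | succ k ih =>
    intro f v x hkf hd hc
    obtain ⟨f, rfl⟩ : ∃ f', f = f' + 1 := ⟨f - 1, by omega⟩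
    -- dist of iterated parent
    have hiter : ∀ i ≤ T.dist t₀ x, T.dist t₀ ((par T t₀)^[i] x) = T.dist t₀ x - i := by
      intro i hi
      induction i with
      | zero => simp
      | succ i ih2 =>
        have h1 : T.dist t₀ ((par T t₀)^[i] x) = T.dist t₀ x - i := ih2 (by omega)
        rw [Function.iterate_succ_apply']
        have hpos : 0 < T.dist t₀ ((par T t₀)^[i] x) := by omega
        have := (par_spec hT hpos).2
        omega
    set u := (par T t₀)^[k] x with hu
    have hdu : T.dist t₀ u = T.dist t₀ v + 1 := by
      have h9 := hiter k (by omega); rw [← hu] at h9; omega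
    have hpu : par T t₀ u = v := by
      have h8 : par T t₀ ((par T t₀)^[k] x) = (par T t₀)^[k+1] x :=
        (Function.iterate_succ_apply' _ _ _).symm
      rw [hu, h8, hc]
    have hadj : T.Adj u v := by
      have hpos : 0 < T.dist t₀ u := by omega
      have := (par_spec hT hpos).1
      rwa [hpu] at this
    have hchild : u ∈ children T t₀ v := mem_children.mpr ⟨hadj.symm, hdu⟩
    exact mem_flat_succ.mpr (Or.inr ⟨u, hchild, ih f u x (by omega) (by omega) rfl⟩)

variable {α : Type*} [DecidableEq α]

lemma mem_take_iff_indexOf_lt {x : α} : ∀ {l : List α} {j : ℕ}, x ∈ l →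
    (x ∈ l.take j ↔ List.idxOf x l < j) := by
  intro l
  induction l with
  | nil => simp
  | cons a t ih =>
    intro j hx
    cases j with
    | zero => simp
    | succ j =>
      by_cases hxa : x = a
      · subst hxa; simp
      · rw [List.take_succ_cons]
        simp only [List.mem_cons, hxa, false_or]
        rw [List.idxOf_cons_ne _ (Ne.symm hxa)]
        rcases List.mem_cons.mp hx with h | h
        · exact absurd h hxa
        · rw [ih h]; omega

lemma take_flatten_decomp : ∀ (B : List (List α)) (j : ℕ), j < B.flatten.length →
    ∃ B₁ b B₂ k, B = B₁ ++ b :: B₂ ∧ k < b.length ∧ B.flatten.take j = B₁.flatten ++ b.take k := by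
  intro B
  induction B with
  | nil => simp
  | cons b B ih =>
    intro j hj
    by_cases hb : j < b.length
    · exact ⟨[], b, B, j, by simp, hb, by
        simp only [List.flatten_cons]
        rw [List.take_append_of_le_length (by omega)]
        simp⟩
    · push_neg at hb
      simp only [List.flatten_cons, List.length_append] at hj
      obtain ⟨B₁, b', B₂, k, hB, hk, htake⟩ := ih (j - b.length) (by omega)
      refine ⟨b :: B₁, b', B₂, k, by simp [hB], hk, ?_⟩
      simp only [List.flatten_cons]
      rw [List.take_append]
      rw [List.take_of_length_le hb, htake]
      simp

lemma nodup_children {V : Type} [Fintype V] {T : SimpleGraph V} {t₀ : V} (v : V) :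
    (children T t₀ v).Nodup := Finset.nodup_toList _

variable {V : Type} [Fintype V] {T : SimpleGraph V} {t₀ : V}




lemma flat_eq_cons (f : ℕ) (v : V) : ∃ rest, flat T t₀ f v = v :: rest := by
  cases f
  · exact ⟨[], rfl⟩
  · exact ⟨_, rfl⟩

lemma length_flat_pos (f : ℕ) (v : V) : 0 < (flat T t₀ f v).length := by
  cases f <;> simp [flat]

lemma mem_blocks {f : ℕ} {v : V} {b : List V} :
    b ∈ ((children T t₀ v).map (flat T t₀ f)).mergeSort (fun a b => a.length ≤ b.length) ↔
      ∃ u ∈ children T t₀ v, flat T t₀ f u = b := by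
  rw [(List.mergeSort_perm _ _).mem_iff]
  simp

lemma sorted_blocks (f : ℕ) (v : V) :
    (((children T t₀ v).map (flat T t₀ f)).mergeSort (fun a b => a.length ≤ b.length)).Pairwise
      (fun a b => a.length ≤ b.length) := by
  have h := List.pairwise_mergeSort (le := fun (a b : List V) => a.length ≤ b.length)
    (by intro a b c hab hbc; simp at *; omega)
    (by intro a b; simp [Nat.le_total]) ((children T t₀ v).map (flat T t₀ f))
  exact h.imp (by intro a b h; simpa using h)

lemma dist_le_of_mem_flat (hT : T.IsTree) {f : ℕ} {v x : V} (h : x ∈ flat T t₀ f v) :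
    T.dist t₀ v ≤ T.dist t₀ x := (flat_ancestor hT f v x h).1

lemma flat_disjoint (hT : T.IsTree) {f : ℕ} {u u' x : V}
    (h : T.dist t₀ u = T.dist t₀ u') (hx : x ∈ flat T t₀ f u) (hx' : x ∈ flat T t₀ f u') :
    u = u' := by
  obtain ⟨h1, h2⟩ := flat_ancestor hT f u x hx
  obtain ⟨h3, h4⟩ := flat_ancestor hT f u' x hx'
  rw [← h2, ← h4, h]

lemma nodup_flat (hT : T.IsTree) : ∀ (f : ℕ) (v : V), (flat T t₀ f v).Nodup := by
  intro f
  induction f with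
  | zero => intro v; simp [flat]
  | succ f ih =>
    intro v
    rw [flat_succ, List.nodup_cons]
    constructor
    · intro hv
      rw [List.mem_flatten] at hv
      obtain ⟨b, hb, hvb⟩ := hv
      obtain ⟨u, hu, rfl⟩ := mem_blocks.mp hb
      have := dist_le_of_mem_flat hT hvb
      have := (mem_children.mp hu).2
      omega
    · rw [List.nodup_flatten]
      constructor
      · intro b hb
        obtain ⟨u, hu, rfl⟩ := mem_blocks.mp hb
        exact ih u
      · have hperm := List.mergeSort_perm ((children T t₀ v).map (flat T t₀ f))
          (fun a b => a.length ≤ b.length)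
        rw [hperm.pairwise_iff (fun {a b} h => List.Disjoint.symm h)]
        rw [List.pairwise_map]
        have hnd : (children T t₀ v).Nodup := nodup_children v
        refine hnd.imp_of_mem ?_
        intro u u' hu hu' hne
        intro x hx hx'
        exact absurd (flat_disjoint hT (by
          rw [(mem_children.mp hu).2, (mem_children.mp hu').2]) hx hx') hne

lemma child_mem_flat (hT : T.IsTree) {f : ℕ} {v x y : V}
    (hfuel : Fintype.card V ≤ T.dist t₀ v + f) (hx : x ∈ flat T t₀ f v)
    (hadj : T.Adj x y) (hd : T.dist t₀ y = T.dist t₀ x + 1) : y ∈ flat T t₀ f v := by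
  obtain ⟨h1, h2⟩ := flat_ancestor hT f v x hx
  have hpy : par T t₀ y = x := par_eq hT hadj.symm (by omega)
  set k := T.dist t₀ x - T.dist t₀ v with hk
  have hchain : (par T t₀)^[k+1] y = v := by
    rw [Function.iterate_succ_apply, hpy, h2]
  have hylt := dist_lt_card hT (t₀ := t₀) y
  exact mem_flat_of_chain hT (k+1) f v y (by omega) (by omega) hchain

noncomputable def badset (T : SimpleGraph V) (t₀ : V) (f : ℕ) (v : V) (j : ℕ) : Finset V :=
  Finset.univ.filter (fun x => x ∈ (flat T t₀ f v).take j ∧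
    ∃ y, T.Adj x y ∧ T.dist t₀ y = T.dist t₀ x + 1 ∧ y ∉ (flat T t₀ f v).take j)

lemma mem_badset {f : ℕ} {v : V} {j : ℕ} {x : V} :
    x ∈ badset T t₀ f v j ↔ x ∈ (flat T t₀ f v).take j ∧
      ∃ y, T.Adj x y ∧ T.dist t₀ y = T.dist t₀ x + 1 ∧ y ∉ (flat T t₀ f v).take j := by
  simp [badset]

lemma core (hT : T.IsTree) : ∀ (f : ℕ) (v : V) (j : ℕ),
    Fintype.card V ≤ T.dist t₀ v + f →
    2 ^ (badset T t₀ f v j).card ≤ (flat T t₀ f v).length := by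
  intro f
  induction f with
  | zero =>
    intro v j hfuel
    exact absurd (dist_lt_card hT (t₀ := t₀) v) (by omega)
  | succ f ih =>
    intro v j hfuel
    set B := ((children T t₀ v).map (flat T t₀ f)).mergeSort
      (fun a b => a.length ≤ b.length) with hB
    have hL : flat T t₀ (f+1) v = v :: B.flatten := flat_succ f v
    rcases Nat.eq_zero_or_pos j with rfl | hj
    · have : badset T t₀ (f+1) v 0 = ∅ := by
        ext x; simp [mem_badset]
      rw [this]
      simpa [Nat.one_le_iff_ne_zero, Nat.pos_iff_ne_zero] using length_flat_pos (f+1) v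
    rcases le_or_gt (flat T t₀ (f+1) v).length j with hjlen | hjlen
    · -- prefix is everything
      have htake : (flat T t₀ (f+1) v).take j = flat T t₀ (f+1) v :=
        List.take_of_length_le hjlen
      have : badset T t₀ (f+1) v j = ∅ := by
        ext x
        simp only [mem_badset, Finset.notMem_empty, iff_false, not_and]
        rintro hx ⟨y, hadj, hd, hy⟩
        rw [htake] at hx hy
        exact hy (child_mem_flat hT hfuel hx hadj hd)
      rw [this]
      simpa [Nat.one_le_iff_ne_zero, Nat.pos_iff_ne_zero] using length_flat_pos (f+1) v
    -- main case
    obtain ⟨j', rfl⟩ : ∃ j', j = j' + 1 := ⟨j - 1, by omega⟩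
    have hj' : j' < B.flatten.length := by
      rw [hL] at hjlen; simp only [List.length_cons] at hjlen; omega
    have htake : (flat T t₀ (f+1) v).take (j'+1) = v :: B.flatten.take j' := by
      rw [hL, List.take_succ_cons]
    obtain ⟨B₁, b, B₂, k, hBeq, hk, hdecomp⟩ := take_flatten_decomp B j' hj'
    obtain ⟨u, hu, hbu⟩ : ∃ u ∈ children T t₀ v, flat T t₀ f u = b := by
      apply mem_blocks.mp; rw [← hB, hBeq]; simp
    have hdu : T.dist t₀ u = T.dist t₀ v + 1 := (mem_children.mp hu).2
    have ihu := ih u k (by omega)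
    rw [hbu] at ihu
    -- prefix subset facts
    have hsub1 : ∀ z, z ∈ B₁.flatten → z ∈ (flat T t₀ (f+1) v).take (j'+1) := by
      intro z hz; rw [htake, hdecomp]; simp [hz]
    have hsub2 : ∀ z, z ∈ b.take k → z ∈ (flat T t₀ (f+1) v).take (j'+1) := by
      intro z hz; rw [htake, hdecomp]; simp [hz]
    -- Claim 1
    have claim1 : ∀ x ∈ badset T t₀ (f+1) v (j'+1), x ≠ v → x ∈ badset T t₀ f u k := by
      intro x hx hxv
      obtain ⟨hxmem, y, hadj, hd, hy⟩ := mem_badset.mp hx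
      rw [htake, hdecomp] at hxmem
      rcases List.mem_cons.mp hxmem with rfl | hxmem
      · exact absurd rfl hxv
      rcases List.mem_append.mp hxmem with hx1 | hx2
      · exfalso
        rw [List.mem_flatten] at hx1
        obtain ⟨b', hb', hxb'⟩ := hx1
        obtain ⟨u', hu', hbu'⟩ : ∃ u' ∈ children T t₀ v, flat T t₀ f u' = b' := by
          apply mem_blocks.mp; rw [← hB, hBeq]; simp [List.mem_append.mpr (Or.inl hb')]
        have hy' : y ∈ b' := by
          rw [← hbu'] at hxb' ⊢
          exact child_mem_flat hT (by rw [(mem_children.mp hu').2]; omega) hxb' hadj hd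
        exact hy (hsub1 y (List.mem_flatten.mpr ⟨b', hb', hy'⟩))
      · have hxb : x ∈ flat T t₀ f u := by
          rw [hbu]; exact List.mem_of_mem_take hx2
        have hyb : y ∈ flat T t₀ f u :=
          child_mem_flat hT (by omega) hxb hadj hd
        rw [mem_badset, hbu]
        refine ⟨hx2, y, hadj, hd, ?_⟩
        intro hyk
        exact hy (hsub2 y hyk)
    rcases List.eq_nil_or_concat' B₂ with rfl | hB₂ne
    · rcases Nat.eq_zero_or_pos k with rfl | hkpos
      · -- B₂ = [], k = 0
        have hsub : badset T t₀ (f+1) v (j'+1) ⊆ {v} := by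
          intro x hx
          by_contra hxv
          simp only [Finset.mem_singleton] at hxv
          have := claim1 x hx hxv
          rw [mem_badset] at this
          simp at this
        have hcard : (badset T t₀ (f+1) v (j'+1)).card ≤ 1 := by
          calc _ ≤ ({v} : Finset V).card := Finset.card_le_card hsub
            _ = 1 := Finset.card_singleton v
        calc 2 ^ (badset T t₀ (f+1) v (j'+1)).card ≤ 2 ^ 1 :=
              Nat.pow_le_pow_right (by norm_num) hcard
          _ ≤ (flat T t₀ (f+1) v).length := by
              rw [hL, hBeq]
              simp only [List.length_cons, List.flatten_append, List.flatten_cons,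
                List.length_append]
              have : 0 < b.length := by omega
              omega
      · -- B₂ = [], k ≥ 1 : v not bad
        have hvnot : v ∉ badset T t₀ (f+1) v (j'+1) := by
          intro hv
          obtain ⟨-, y, hadj, hd, hy⟩ := mem_badset.mp hv
          have hyc : y ∈ children T t₀ v := mem_children.mpr ⟨hadj, hd⟩
          have hyB : flat T t₀ f y ∈ B := by
            apply mem_blocks.mpr; exact ⟨y, hyc, rfl⟩
          rw [hBeq] at hyB
          rcases List.mem_append.mp hyB with h1 | h2
          · exact hy (hsub1 y (List.mem_flatten.mpr ⟨_, h1, head_mem_flat f y⟩))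
          · simp only [List.mem_cons, List.not_mem_nil, or_false] at h2
            apply hy
            apply hsub2
            rw [← h2]
            obtain ⟨rest, hrest⟩ := flat_eq_cons (T := T) (t₀ := t₀) f y
            rw [hrest]
            rcases k with _ | k
            · omega
            · simp
        have hsub : badset T t₀ (f+1) v (j'+1) ⊆ badset T t₀ f u k := by
          intro x hx
          exact claim1 x hx (fun h => hvnot (h ▸ hx))
        calc 2 ^ (badset T t₀ (f+1) v (j'+1)).card ≤ 2 ^ (badset T t₀ f u k).card :=
              Nat.pow_le_pow_right (by norm_num) (Finset.card_le_card hsub)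
          _ ≤ b.length := ihu
          _ ≤ (flat T t₀ (f+1) v).length := by
              rw [hL, hBeq]
              simp only [List.length_cons, List.flatten_append, List.flatten_cons,
                List.length_append]
              omega
    · -- B₂ ≠ []
      obtain ⟨B₂', b₂, rfl⟩ := hB₂ne
      have hb₂len : b.length ≤ b₂.length := by
        have hsort := sorted_blocks (T := T) (t₀ := t₀) f v
        rw [← hB, hBeq] at hsort
        have h1 := (List.pairwise_append.mp hsort).1
        have h2 := (List.pairwise_append.mp hsort).2.1
        have h3 := (List.pairwise_cons.mp h2).1
        exact h3 b₂ (by simp)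
      have hb₂sub : b₂.length ≤ (B₂' ++ [b₂]).flatten.length := by
        have : b₂.Sublist (B₂' ++ [b₂]).flatten :=
          List.sublist_flatten_of_mem (by simp)
        exact this.length_le
      have hsub : badset T t₀ (f+1) v (j'+1) ⊆ insert v (badset T t₀ f u k) := by
        intro x hx
        rcases eq_or_ne x v with rfl | hxv
        · exact Finset.mem_insert_self _ _
        · exact Finset.mem_insert_of_mem (claim1 x hx hxv)
      have hcard : (badset T t₀ (f+1) v (j'+1)).card ≤ (badset T t₀ f u k).card + 1 := by
        calc _ ≤ (insert v (badset T t₀ f u k)).card := Finset.card_le_card hsub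
          _ ≤ _ := Finset.card_insert_le _ _
      calc 2 ^ (badset T t₀ (f+1) v (j'+1)).card ≤ 2 ^ ((badset T t₀ f u k).card + 1) :=
            Nat.pow_le_pow_right (by norm_num) hcard
        _ = 2 * 2 ^ (badset T t₀ f u k).card := by ring
        _ ≤ 2 * b.length := by omega
        _ ≤ (flat T t₀ (f+1) v).length := by
            rw [hL, hBeq]
            simp only [List.length_cons, List.flatten_append, List.flatten_cons,
              List.length_append]
            omega

lemma indexOf_flatten_lt {α : Type} [DecidableEq α] :
    ∀ (B : List (List α)) (x y : α),
    (∀ b ∈ B, (x ∈ b ↔ y ∈ b) ∧ (x ∈ b → List.idxOf x b < List.idxOf y b)) →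
    x ∈ B.flatten → List.idxOf x B.flatten < List.idxOf y B.flatten := by
  intro B
  induction B with
  | nil => simp
  | cons b rest ih =>
    intro x y H hx
    simp only [List.flatten_cons]
    by_cases hxb : x ∈ b
    · have hyb : y ∈ b := ((H b (by simp)).1).mp hxb
      rw [List.idxOf_append_of_mem hxb, List.idxOf_append_of_mem hyb]
      exact (H b (by simp)).2 hxb
    · have hyb : y ∉ b := fun hy => hxb (((H b (by simp)).1).mpr hy)
      rw [List.idxOf_append_of_notMem hxb, List.idxOf_append_of_notMem hyb]
      have hxr : x ∈ rest.flatten := by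
        simp only [List.flatten_cons, List.mem_append] at hx
        tauto
      have := ih x y (fun b' hb' => H b' (by simp [hb'])) hxr
      omega

lemma parent_before (hT : T.IsTree) : ∀ (f : ℕ) (v x y : V),
    Fintype.card V ≤ T.dist t₀ v + f → x ∈ flat T t₀ f v →
    T.Adj x y → T.dist t₀ y = T.dist t₀ x + 1 →
    List.idxOf x (flat T t₀ f v) < List.idxOf y (flat T t₀ f v) := by
  intro f
  induction f with
  | zero =>
    intro v x y hfuel
    exact absurd (dist_lt_card hT (t₀ := t₀) v) (by omega)
  | succ f ih =>
    intro v x y hfuel hx hadj hd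
    have hdxv : T.dist t₀ v ≤ T.dist t₀ x := (flat_ancestor hT _ v x hx).1
    have hyv : y ≠ v := by
      intro h
      rw [h] at hd
      omega
    set B := ((children T t₀ v).map (flat T t₀ f)).mergeSort
      (fun a b => a.length ≤ b.length) with hB
    have hL : flat T t₀ (f+1) v = v :: B.flatten := rfl
    rcases eq_or_ne x v with rfl | hxv
    · -- x = v : index 0
      rw [hL, List.idxOf_cons_self, List.idxOf_cons_ne _ (Ne.symm hyv)]
      omega
    · have hxB : x ∈ B.flatten := by
        rw [hL] at hx
        rcases List.mem_cons.mp hx with h | h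
        · exact absurd h hxv
        · exact h
      rw [hL, List.idxOf_cons_ne _ (Ne.symm hxv), List.idxOf_cons_ne _ (Ne.symm hyv)]
      have key : ∀ b ∈ B, (x ∈ b ↔ y ∈ b) ∧ (x ∈ b → List.idxOf x b < List.idxOf y b) := by
        intro b hb
        obtain ⟨u', hu', rfl⟩ := mem_blocks.mp hb
        have hdu' : T.dist t₀ u' = T.dist t₀ v + 1 := (mem_children.mp hu').2
        have hfuel' : Fintype.card V ≤ T.dist t₀ u' + f := by omega
        constructor
        · constructor
          · intro hxb; exact child_mem_flat hT hfuel' hxb hadj hd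
          · intro hyb
            obtain ⟨h1, h2⟩ := flat_ancestor hT f u' y hyb
            have hpy : par T t₀ y = x := par_eq hT hadj.symm (by omega)
            set m := T.dist t₀ y - T.dist t₀ u' with hm
            have hm1 : 1 ≤ m := by
              rcases Nat.eq_zero_or_pos m with h0 | hpos
              · exfalso
                rw [h0] at h2
                simp only [Function.iterate_zero, id_eq] at h2
                have hparu : par T t₀ u' = v :=
                  par_eq hT (mem_children.mp hu').1.symm (by omega)
                rw [h2] at hpy
                rw [hparu] at hpy
                exact hxv hpy.symm
              · exact hpos
            have hchain : (par T t₀)^[m-1] x = u' := by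
              have : (par T t₀)^[(m-1)+1] y = u' := by
                rwa [show (m-1)+1 = m by omega]
              rwa [Function.iterate_succ_apply, hpy] at this
            have hdx : T.dist t₀ x = T.dist t₀ u' + (m - 1) := by omega
            have hmf : m - 1 ≤ f := by
              have := dist_lt_card hT (t₀ := t₀) x
              omega
            exact mem_flat_of_chain hT (m-1) f u' x hmf hdx hchain
        · intro hxb
          exact ih u' x y hfuel' hxb hadj hd
      have := indexOf_flatten_lt B x y key hxB
      omega

theorem main (hT : T.IsTree) :
    ∃ σ : V ≃ Fin (Fintype.card V),
        (σ t₀ : ℕ) = 0 ∧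
        (∀ x y : V, T.Adj x y → T.dist t₀ y < T.dist t₀ x → (σ y : ℕ) < (σ x : ℕ)) ∧
        ∀ j : ℕ,
          ((({x : V | (σ x : ℕ) < j ∧
              ∃ y : V, T.Adj x y ∧ T.dist t₀ x < T.dist t₀ y ∧ j ≤ (σ y : ℕ)} :
              Set V).ncard : ℝ))
            ≤ Real.logb 2 (Fintype.card V) := by
  classical
  set n := Fintype.card V with hn
  set L := flat T t₀ n t₀ with hLdef
  have hd0 : T.dist t₀ t₀ = 0 := SimpleGraph.dist_self
  have hchain : ∀ (m : ℕ) (x : V), T.dist t₀ x = m → (par T t₀)^[m] x = t₀ := by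
    intro m
    induction m with
    | zero =>
      intro x hx
      simp only [Function.iterate_zero, id_eq]
      exact (hT.isConnected.dist_eq_zero_iff.mp hx).symm
    | succ m ihm =>
      intro x hx
      rw [Function.iterate_succ_apply]
      apply ihm
      have := (par_spec hT (t₀ := t₀) (x := x) (by omega)).2
      omega
  have hmem : ∀ x : V, x ∈ L := by
    intro x
    exact mem_flat_of_chain hT (T.dist t₀ x) n t₀ x
      (le_of_lt (dist_lt_card hT x)) (by omega) (hchain _ x rfl)
  have hnodup : L.Nodup := nodup_flat hT n t₀
  have hlen : L.length = n := by
    have h1 : L.toFinset.card = L.length := List.toFinset_card_of_nodup hnodup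
    have h2 : L.toFinset = Finset.univ := by
      ext x; simp [hmem x]
    rw [h2] at h1
    simpa [hn] using h1.symm
  have hfuel : Fintype.card V ≤ T.dist t₀ t₀ + n := by omega
  refine ⟨{
    toFun := fun x => ⟨List.idxOf x L, by rw [← hlen]; exact List.idxOf_lt_length_iff.mpr (hmem x)⟩
    invFun := fun i => L.get ⟨i, by rw [hlen]; exact i.isLt⟩
    left_inv := fun x => List.idxOf_get _
    right_inv := fun i => by
      apply Fin.ext
      exact List.get_idxOf hnodup _ }, ?_, ?_, ?_⟩
  · show List.idxOf t₀ L = 0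
    obtain ⟨rest, hrest⟩ := flat_eq_cons (T := T) (t₀ := t₀) n t₀
    rw [← hLdef] at hrest
    rw [hrest, List.idxOf_cons_self]
  · intro x y hadj hdlt
    show List.idxOf y L < List.idxOf x L
    have h1 : T.dist t₀ x ≤ T.dist t₀ y + 1 := adj_dist_le hT hadj.symm
    exact parent_before hT n t₀ y x hfuel (hmem y) hadj.symm (by omega)
  · intro j
    have hset : {x : V | List.idxOf x L < j ∧
        ∃ y : V, T.Adj x y ∧ T.dist t₀ x < T.dist t₀ y ∧ j ≤ List.idxOf y L} =
        ↑(badset T t₀ n t₀ j) := by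
      ext x
      simp only [Set.mem_setOf_eq, Finset.mem_coe, mem_badset]
      constructor
      · rintro ⟨hxj, y, hadj, hdlt, hyj⟩
        have h1 : T.dist t₀ y ≤ T.dist t₀ x + 1 := adj_dist_le hT hadj
        refine ⟨(mem_take_iff_indexOf_lt (hmem x)).mpr hxj, y, hadj, by omega, ?_⟩
        intro hy
        have := (mem_take_iff_indexOf_lt (hmem y)).mp hy
        omega
      · rintro ⟨hxj, y, hadj, hd, hyj⟩
        refine ⟨(mem_take_iff_indexOf_lt (hmem x)).mp hxj, y, hadj, by omega, ?_⟩
        by_contra hcon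
        push_neg at hcon
        exact hyj ((mem_take_iff_indexOf_lt (hmem y)).mpr hcon)
    show (({x : V | List.idxOf x L < j ∧
        ∃ y : V, T.Adj x y ∧ T.dist t₀ x < T.dist t₀ y ∧ j ≤ List.idxOf y L} : Set V).ncard : ℝ)
        ≤ Real.logb 2 n
    rw [hset, Set.ncard_coe_finset]
    have hcore : 2 ^ (badset T t₀ n t₀ j).card ≤ n := by
      have := core hT n t₀ j hfuel
      rw [← hLdef, hlen] at this
      exact this
    have hnpos : 0 < n := by
      rw [hn]; exact Fintype.card_pos_iff.mpr ⟨t₀⟩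
    rw [Real.le_logb_iff_rpow_le one_lt_two (by exact_mod_cast hnpos)]
    rw [Real.rpow_natCast]
    exact_mod_cast hcore

end Tidy

/-- Every finite rooted tree admits a tidy ancestral ordering: the root
comes first, every vertex appears after its parent (its unique neighbour closer to the
root), and every initial segment `I` contains at most `log₂ |T|` vertices having a child
outside `I`. -/
theorem tidy_ancestral_ordering :
    ∀ (V : Type) [Fintype V], ∀ (T : SimpleGraph V) (t₀ : V), T.IsTree →
      ∃ σ : V ≃ Fin (Fintype.card V),
        (σ t₀ : ℕ) = 0 ∧
        (∀ x y : V, T.Adj x y → T.dist t₀ y < T.dist t₀ x → (σ y : ℕ) < (σ x : ℕ)) ∧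
        ∀ j : ℕ,
          ((({x : V | (σ x : ℕ) < j ∧
              ∃ y : V, T.Adj x y ∧ T.dist t₀ x < T.dist t₀ y ∧ j ≤ (σ y : ℕ)} :
              Set V).ncard : ℝ))
            ≤ Real.logb 2 (Fintype.card V) := by
  intro V _ T t₀ hT
  exact Tidy.main hT
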